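/- Let α ∈ (0,1) be irrational with convergent denominators q_k. Let L ≥ 1 (or L ≥ 0 if α < 1/2), and let ∥·∥* ∈ {ξ ↦ {ξ}, ξ ↦ {−ξ}} be chosen so that ∥q_L α∥* < 1/2. Then ∥q_L α∥* > ∥(q_L + q_{L+1})α∥* > ⋯ > ∥(q_L + (a_{L+2}−1) q_{L+1})α∥* > ∥q_{L+2} α∥*. -/

import Mathlib

/-- Gauss-map iterates of `α`. -/
noncomputable def cfFrac (α : ℝ) : ℕ → ℝ
  | 0 => α
  | k + 1 => Int.fract (1 / cfFrac α k)

/-- Partial quotients of `α` (1-indexed, `cfA α 0 = 0` unused). -/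
noncomputable def cfA (α : ℝ) : ℕ → ℕ
  | 0 => 0
  | k + 1 => (⌊1 / cfFrac α k⌋).toNat

/-- Numerators of the convergents of `α`. -/
noncomputable def cfP (α : ℝ) : ℕ → ℕ
  | 0 => 0
  | 1 => 1
  | k + 2 => cfA α (k + 2) * cfP α (k + 1) + cfP α k

/-- Denominators of the convergents of `α`. -/
noncomputable def cfQ (α : ℝ) : ℕ → ℕ
  | 0 => 1
  | 1 => cfA α 1
  | k + 2 => cfA α (k + 2) * cfQ α (k + 1) + cfQ α k

/-- Distance from `x` to the nearest integer. -/
noncomputable def distNearInt (x : ℝ) : ℝ := min (Int.fract x) (1 - Int.fract x)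

noncomputable def cfProd (α : ℝ) (k : ℕ) : ℝ := ∏ i ∈ Finset.range (k+1), cfFrac α i

lemma cfFrac_prop (α : ℝ) (hα : α ∈ Set.Ioo (0:ℝ) 1) (hirr : Irrational α) :
    ∀ k, Irrational (cfFrac α k) ∧ 0 < cfFrac α k ∧ cfFrac α k < 1 := by
  intro k
  induction k with
  | zero => exact ⟨hirr, hα.1, hα.2⟩
  | succ n ih =>
    obtain ⟨hi, h0, h1⟩ := ih
    have hinv : Irrational (1 / cfFrac α n) := by
      simpa [one_div] using hi.inv
    have hfr : Irrational (Int.fract (1 / cfFrac α n)) := by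
      unfold Int.fract; exact hinv.sub_intCast _
    have heq : cfFrac α (n + 1) = Int.fract (1 / cfFrac α n) := rfl
    refine ⟨by rw [heq]; exact hfr, ?_, ?_⟩
    · rcases (Int.fract_nonneg (1 / cfFrac α n)).lt_or_eq with h | h
      · rw [heq]; exact h
      · exact absurd h.symm hfr.ne_zero
    · rw [heq]; exact Int.fract_lt_one _

lemma cfA_eq (α : ℝ) (hα : α ∈ Set.Ioo (0:ℝ) 1) (hirr : Irrational α) (k : ℕ) :
    (cfA α (k+1) : ℝ) = 1 / cfFrac α k - cfFrac α (k+1) ∧ 1 ≤ cfA α (k+1) := by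
  obtain ⟨hi, h0, h1⟩ := cfFrac_prop α hα hirr k
  have hgt : 1 < 1 / cfFrac α k := by
    rw [lt_div_iff₀ h0]; linarith
  have hfl : 1 ≤ ⌊1 / cfFrac α k⌋ := by
    have : ((1:ℤ):ℝ) ≤ 1 / cfFrac α k := by exact_mod_cast hgt.le
    exact Int.le_floor.mpr this
  have hA : cfA α (k+1) = (⌊1 / cfFrac α k⌋).toNat := rfl
  constructor
  · have hcast : (cfA α (k+1) : ℝ) = (⌊1 / cfFrac α k⌋ : ℝ) := by
      rw [hA, ← Int.cast_natCast, Int.toNat_of_nonneg (by linarith)]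
    rw [hcast]
    have heq : cfFrac α (k + 1) = Int.fract (1 / cfFrac α k) := rfl
    rw [heq, Int.fract]; ring
  · rw [hA]; omega

lemma cfA_mul (α : ℝ) (hα : α ∈ Set.Ioo (0:ℝ) 1) (hirr : Irrational α) (k : ℕ) :
    (cfA α (k+2) : ℝ) * cfFrac α (k+1) = 1 - cfFrac α (k+1) * cfFrac α (k+2) := by
  have ha : (cfA α (k+2) : ℝ) = 1 / cfFrac α (k+1) - cfFrac α (k+2) :=
    (cfA_eq α hα hirr (k+1)).1
  have hx0 : cfFrac α (k+1) ≠ 0 := ne_of_gt (cfFrac_prop α hα hirr (k+1)).2.1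
  rw [ha]
  field_simp

lemma cfProd_zero (α : ℝ) : cfProd α 0 = α := by
  unfold cfProd
  rw [Finset.prod_range_one]
  rfl

lemma cfProd_succ (α : ℝ) (k : ℕ) : cfProd α (k+1) = cfProd α k * cfFrac α (k+1) :=
  Finset.prod_range_succ _ _

lemma cfProd_pos (α : ℝ) (hα : α ∈ Set.Ioo (0:ℝ) 1) (hirr : Irrational α) (k : ℕ) :
    0 < cfProd α k :=
  Finset.prod_pos (fun i _ => (cfFrac_prop α hα hirr i).2.1)

lemma cfProd_lt (α : ℝ) (hα : α ∈ Set.Ioo (0:ℝ) 1) (hirr : Irrational α) (k : ℕ) :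
    cfProd α (k+1) < cfProd α k := by
  rw [cfProd_succ]
  nlinarith [cfProd_pos α hα hirr k, (cfFrac_prop α hα hirr (k+1)).2.1,
    (cfFrac_prop α hα hirr (k+1)).2.2]

lemma cfProd_lt_one (α : ℝ) (hα : α ∈ Set.Ioo (0:ℝ) 1) (hirr : Irrational α) (k : ℕ) :
    cfProd α k < 1 := by
  induction k with
  | zero => rw [cfProd_zero]; exact hα.2
  | succ n ih => exact (cfProd_lt α hα hirr n).trans ih

lemma cfProd_anti (α : ℝ) (hα : α ∈ Set.Ioo (0:ℝ) 1) (hirr : Irrational α)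
    {m n : ℕ} (h : m ≤ n) : cfProd α n ≤ cfProd α m := by
  induction n, h using Nat.le_induction with
  | base => exact le_rfl
  | succ n hmn ih => exact le_trans (cfProd_lt α hα hirr n).le ih

lemma cfProd_rec (α : ℝ) (hα : α ∈ Set.Ioo (0:ℝ) 1) (hirr : Irrational α) (k : ℕ) :
    cfProd α (k+2) = cfProd α k - (cfA α (k+2) : ℝ) * cfProd α (k+1) := by
  have h1 : cfProd α (k+2) = cfProd α (k+1) * cfFrac α (k+2) := cfProd_succ α (k+1)
  have h2 : cfProd α (k+1) = cfProd α k * cfFrac α (k+1) := cfProd_succ α k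
  have h3 := cfA_mul α hα hirr k
  rw [h1, h2]
  linear_combination (cfProd α k) * h3

lemma cfProd_half (α : ℝ) (hα : α ∈ Set.Ioo (0:ℝ) 1) (hirr : Irrational α)
    (L : ℕ) (hL : 1 ≤ L ∨ α < 1 / 2) : cfProd α L < 1/2 := by
  have hα0 : (0:ℝ) < α := hα.1
  have hαne : α ≠ 0 := ne_of_gt hα0
  have hP1 : cfProd α 1 < 1/2 := by
    obtain ⟨ha1, ha1ge⟩ := cfA_eq α hα hirr 0
    have h0 : cfFrac α 0 = α := rfl
    have hP1eq : cfProd α 1 = α * cfFrac α 1 := by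
      rw [cfProd_succ, cfProd_zero]
    have hx1eq : cfFrac α 1 = 1/α - (cfA α 1 : ℝ) := by
      rw [h0] at ha1; linarith
    have hge : (1:ℝ) ≤ (cfA α 1 : ℝ) := by exact_mod_cast ha1ge
    rcases le_or_gt α (1/2) with h | h
    · have hx1 := (cfFrac_prop α hα hirr 1).2.2
      have hx0 := (cfFrac_prop α hα hirr 1).2.1
      rw [hP1eq]; nlinarith
    · have hP1eq2 : cfProd α 1 = 1 - (cfA α 1 : ℝ) * α := by
        rw [hP1eq, hx1eq]
        field_simp
      rw [hP1eq2]; nlinarith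
  rcases hL with hL | hL
  · exact lt_of_le_of_lt (cfProd_anti α hα hirr hL) hP1
  · rcases Nat.eq_zero_or_pos L with h0' | h0'
    · subst h0'; rw [cfProd_zero]; exact hL
    · exact lt_of_le_of_lt (cfProd_anti α hα hirr h0') hP1

lemma cfPQ_eq (α : ℝ) (hα : α ∈ Set.Ioo (0:ℝ) 1) (hirr : Irrational α) :
    ∀ k, (cfQ α k : ℝ) * α - (cfP α k : ℝ) = (-1)^k * cfProd α k := by
  intro k
  induction k using Nat.twoStepInduction with
  | zero =>
    rw [cfProd_zero]
    simp [cfQ, cfP]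
  | one =>
    obtain ⟨ha, _⟩ := cfA_eq α hα hirr 0
    have h0 : cfFrac α 0 = α := rfl
    have hQ : cfQ α 1 = cfA α 1 := rfl
    have hP : cfP α 1 = 1 := rfl
    have hα0 : α ≠ 0 := ne_of_gt hα.1
    rw [hQ, hP, cfProd_succ, cfProd_zero, ha, h0]
    field_simp
    push_cast
    ring
  | more n ih1 ih2 =>
    have h3 := cfA_mul α hα hirr n
    have hQ : (cfQ α (n+2) : ℝ) = (cfA α (n+2) : ℝ) * (cfQ α (n+1) : ℝ) + (cfQ α n : ℝ) := by
      have h : cfQ α (n+2) = cfA α (n+2) * cfQ α (n+1) + cfQ α n := rfl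
      rw [h]; push_cast; ring
    have hP : (cfP α (n+2) : ℝ) = (cfA α (n+2) : ℝ) * (cfP α (n+1) : ℝ) + (cfP α n : ℝ) := by
      have h : cfP α (n+2) = cfA α (n+2) * cfP α (n+1) + cfP α n := rfl
      rw [h]; push_cast; ring
    have hp2 : cfProd α (n+2) = cfProd α (n+1) * cfFrac α (n+2) := cfProd_succ α (n+1)
    have hp1 : cfProd α (n+1) = cfProd α n * cfFrac α (n+1) := cfProd_succ α n
    rw [hQ, hP, hp2, hp1]
    rw [hp1] at ih2
    linear_combination (cfA α (n+2) : ℝ) * ih2 + ih1 - ((-1:ℝ))^n * (cfProd α n) * h3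

lemma fract_add_pos (m : ℤ) (t : ℝ) (h0 : 0 < t) (h1 : t < 1) :
    Int.fract ((m:ℝ) + t) = t := by
  rw [Int.fract_intCast_add, Int.fract_eq_self.mpr ⟨h0.le, h1⟩]

lemma fract_sub_pos (m : ℤ) (t : ℝ) (h0 : 0 < t) (h1 : t < 1) :
    Int.fract ((m:ℝ) - t) = 1 - t := by
  have h : (m:ℝ) - t = (m:ℝ) + (-t) := by ring
  have hf : Int.fract t = t := Int.fract_eq_self.mpr ⟨h0.le, h1⟩
  rw [h, Int.fract_intCast_add, Int.fract_neg (by rw [hf]; exact h0.ne'), hf]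

lemma main_aux (α : ℝ) (hα : α ∈ Set.Ioo (0:ℝ) 1) (hirr : Irrational α) (L : ℕ)
    (f : ℝ → ℝ)
    (heval : ∀ (m : ℤ) (t : ℝ), 0 < t → t < 1 → f ((m:ℝ) + (-1)^L * t) = t) :
    (∀ a : ℕ, a + 1 < cfA α (L + 2) →
        f (((cfQ α L + (a + 1) * cfQ α (L + 1) : ℕ) : ℝ) * α) <
          f (((cfQ α L + a * cfQ α (L + 1) : ℕ) : ℝ) * α)) ∧
      f ((cfQ α (L + 2) : ℝ) * α) <
        f (((cfQ α L + (cfA α (L + 2) - 1) * cfQ α (L + 1) : ℕ) : ℝ) * α) := by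
  have hPpos := cfProd_pos α hα hirr
  have hDrec := cfProd_rec α hα hirr L
  have haL2ge : 1 ≤ cfA α (L+2) := (cfA_eq α hα hirr (L+1)).2
  have hkey : ∀ a : ℕ, ((cfQ α L + a * cfQ α (L+1) : ℕ) : ℝ) * α
      = ((cfP α L + a * cfP α (L+1) : ℕ) : ℝ)
        + (-1)^L * (cfProd α L - (a:ℝ) * cfProd α (L+1)) := by
    intro a
    have h1 := cfPQ_eq α hα hirr L
    have h2 := cfPQ_eq α hα hirr (L+1)
    push_cast
    linear_combination h1 + (a:ℝ) * h2
  have hspos : ∀ a : ℕ, a ≤ cfA α (L+2) → 0 < cfProd α L - (a:ℝ) * cfProd α (L+1) := by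
    intro a ha
    have : (a:ℝ) ≤ (cfA α (L+2) : ℝ) := by exact_mod_cast ha
    nlinarith [hPpos (L+2), hPpos (L+1), hDrec]
  have hslt1 : ∀ a : ℕ, cfProd α L - (a:ℝ) * cfProd α (L+1) < 1 := by
    intro a
    have := cfProd_lt_one α hα hirr L
    nlinarith [hPpos (L+1), Nat.cast_nonneg (α := ℝ) a]
  have heval' : ∀ a : ℕ, a ≤ cfA α (L+2) →
      f (((cfQ α L + a * cfQ α (L+1) : ℕ) : ℝ) * α)
        = cfProd α L - (a:ℝ) * cfProd α (L+1) := by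
    intro a ha
    rw [hkey a]
    have := heval ((cfP α L + a * cfP α (L+1) : ℕ) : ℤ) (cfProd α L - (a:ℝ) * cfProd α (L+1))
      (hspos a ha) (hslt1 a)
    push_cast at this ⊢
    exact this
  have heval2 : f ((cfQ α (L+2) : ℝ) * α) = cfProd α (L+2) := by
    have h := cfPQ_eq α hα hirr (L+2)
    have hq : (cfQ α (L+2) : ℝ) * α = ((cfP α (L+2) : ℤ) : ℝ) + (-1)^L * cfProd α (L+2) := by
      push_cast
      linear_combination h
    rw [hq]
    exact heval _ _ (hPpos (L+2)) (cfProd_lt_one α hα hirr (L+2))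
  constructor
  · intro a ha
    rw [heval' (a+1) (by omega), heval' a (by omega)]
    push_cast
    nlinarith [hPpos (L+1)]
  · rw [heval2, heval' (cfA α (L+2) - 1) (Nat.sub_le _ _)]
    have hcast : ((cfA α (L+2) - 1 : ℕ) : ℝ) = (cfA α (L+2) : ℝ) - 1 := by
      push_cast [haL2ge]
      ring
    rw [hcast, hDrec]
    nlinarith [hPpos (L+1)]

theorem stmt13 (α : ℝ) (hα : α ∈ Set.Ioo (0:ℝ) 1) (hirr : Irrational α)
    (L : ℕ) (hL : 1 ≤ L ∨ α < 1 / 2)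
    (f : ℝ → ℝ) (hf : f = (fun ξ => Int.fract ξ) ∨ f = (fun ξ => Int.fract (-ξ)))
    (hfq : f ((cfQ α L : ℝ) * α) < 1 / 2) :
    (∀ a : ℕ, a + 1 < cfA α (L + 2) →
        f (((cfQ α L + (a + 1) * cfQ α (L + 1) : ℕ) : ℝ) * α) <
          f (((cfQ α L + a * cfQ α (L + 1) : ℕ) : ℝ) * α)) ∧
      f ((cfQ α (L + 2) : ℝ) * α) <
        f (((cfQ α L + (cfA α (L + 2) - 1) * cfQ α (L + 1) : ℕ) : ℝ) * α) := by
  have hPpos := cfProd_pos α hα hirr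
  have hPlt1 := cfProd_lt_one α hα hirr
  have hPL : cfProd α L < 1/2 := cfProd_half α hα hirr L hL
  have hqL : (cfQ α L : ℝ) * α = ((cfP α L : ℤ) : ℝ) + (-1)^L * cfProd α L := by
    push_cast
    linear_combination cfPQ_eq α hα hirr L
  rcases Nat.even_or_odd L with hpar | hpar <;> rcases hf with hf | hf
  · -- Even L, f = fract : matching
    apply main_aux α hα hirr L f
    intro m t h0 h1
    rw [hf, hpar.neg_one_pow, one_mul]
    exact fract_add_pos m t h0 h1
  · -- Even L, f = fract(-·) : mismatch
    exfalso
    rw [hqL, hf] at hfq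
    have he : -(((cfP α L : ℤ) : ℝ) + (-1)^L * cfProd α L)
        = ((-(cfP α L : ℤ) : ℤ) : ℝ) - cfProd α L := by
      rw [hpar.neg_one_pow]; push_cast; ring
    simp only [he, fract_sub_pos _ _ (hPpos L) (hPlt1 L)] at hfq
    linarith
  · -- Odd L, f = fract : mismatch
    exfalso
    rw [hqL, hf] at hfq
    have he : (((cfP α L : ℤ) : ℝ) + (-1)^L * cfProd α L)
        = (((cfP α L : ℤ)) : ℝ) - cfProd α L := by
      rw [hpar.neg_one_pow]; ring
    simp only [he, fract_sub_pos _ _ (hPpos L) (hPlt1 L)] at hfq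
    linarith
  · -- Odd L, f = fract(-·) : matching
    apply main_aux α hα hirr L f
    intro m t h0 h1
    rw [hf]
    have he : -((m:ℝ) + (-1)^L * t) = ((-m : ℤ) : ℝ) + t := by
      rw [hpar.neg_one_pow]; push_cast; ring
    simp only [he]
    exact fract_add_pos _ _ h0 h1
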